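/- For every quantum channel Φ on Matrix (Fin 2) (Fin 2) ℂ there exist unitary matrices U₁, U₂ ∈ Matrix (Fin 2) (Fin 2) ℂ such that the map D(ρ) = U₁ᴴ * Φ(U₂ᴴ * ρ * U₂) * U₁ is a quantum channel whose Pauli representation D̂ satisfies D̂₀₀ = 1, D̂₀ⱼ = 0 for j ∈ {1,2,3}, and D̂ᵢⱼ = 0 for all i ≠ j with i, j ∈ {1,2,3}; that is, D̂ has the block form [[1, 0ᵀ], [γ, diag(λ₁, λ₂, λ₃)]] for some γ ∈ ℝ³ and λ₁, λ₂, λ₃ ∈ ℝ (the special orthogonal normal form). -/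

import Mathlib

open scoped Kronecker ComplexOrder Matrix
open scoped RealInnerProductSpace

noncomputable section

/-- The identity and the three Pauli matrices. -/
def pauli : Fin 4 → Matrix (Fin 2) (Fin 2) ℂ
  | 0 => 1
  | 1 => !![0, 1; 1, 0]
  | 2 => !![0, -Complex.I; Complex.I, 0]
  | 3 => !![1, 0; 0, -1]

/-- The Pauli (matrix) representation of a qubit linear map:
`Φ̂ i j = (1/2) trace (σ i * Φ (σ j))`. -/
def pauliRep (Φ : Matrix (Fin 2) (Fin 2) ℂ →ₗ[ℂ] Matrix (Fin 2) (Fin 2) ℂ) :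
    Matrix (Fin 4) (Fin 4) ℂ :=
  Matrix.of fun i j => (1 / 2 : ℂ) * (pauli i * Φ (pauli j)).trace

/-- The block of `M` at position `(a, b)` when `M` is viewed as a block matrix. -/
def blockAt {k n : ℕ} (M : Matrix (Fin k × Fin n) (Fin k × Fin n) ℂ) (a b : Fin k) :
    Matrix (Fin n) (Fin n) ℂ :=
  Matrix.of fun i j => M (a, i) (b, j)

/-- The extension `id_k ⊗ Φ` of a linear map `Φ` acting blockwise on block matrices. -/
def matExtend {n : ℕ} (k : ℕ) (Φ : Matrix (Fin n) (Fin n) ℂ →ₗ[ℂ] Matrix (Fin n) (Fin n) ℂ)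
    (M : Matrix (Fin k × Fin n) (Fin k × Fin n) ℂ) :
    Matrix (Fin k × Fin n) (Fin k × Fin n) ℂ :=
  ∑ a : Fin k, ∑ b : Fin k,
    (Matrix.single a b (1 : ℂ)) ⊗ₖ Φ (blockAt M a b)

/-- A quantum channel: a completely positive and trace-preserving linear map. -/
def IsQuantumChannel {n : ℕ}
    (Φ : Matrix (Fin n) (Fin n) ℂ →ₗ[ℂ] Matrix (Fin n) (Fin n) ℂ) : Prop :=
  (∀ k : ℕ, 1 ≤ k → ∀ M : Matrix (Fin k × Fin n) (Fin k × Fin n) ℂ,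
    M.PosSemidef → (matExtend k Φ M).PosSemidef) ∧
  (∀ X, (Φ X).trace = X.trace)

/-! ### Auxiliary lemmas -/

@[simp] lemma pauli0 : pauli 0 = 1 := rfl
@[simp] lemma pauli1 : pauli 1 = !![0, 1; 1, 0] := rfl
@[simp] lemma pauli2 : pauli 2 = !![0, -Complex.I; Complex.I, 0] := rfl
@[simp] lemma pauli3 : pauli 3 = !![1, 0; 0, -1] := rfl

/-- conjugation map as a linear map -/
def conjLM {n : ℕ} (U : Matrix (Fin n) (Fin n) ℂ) :
    Matrix (Fin n) (Fin n) ℂ →ₗ[ℂ] Matrix (Fin n) (Fin n) ℂ where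
  toFun ρ := Uᴴ * ρ * U
  map_add' x y := by noncomm_ring
  map_smul' c x := by simp [Matrix.mul_smul, Matrix.smul_mul]

@[simp] lemma conjLM_apply {n : ℕ} (U ρ : Matrix (Fin n) (Fin n) ℂ) :
    conjLM U ρ = Uᴴ * ρ * U := rfl

lemma conjLM_mul {n : ℕ} (A B : Matrix (Fin n) (Fin n) ℂ) :
    conjLM (A * B) = conjLM B ∘ₗ conjLM A := by
  refine LinearMap.ext fun ρ => ?_
  simp [Matrix.conjTranspose_mul, Matrix.mul_assoc]

lemma pauli_expand (X : Matrix (Fin 2) (Fin 2) ℂ) :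
    X = ∑ j : Fin 4, ((1 / 2 : ℂ) * (pauli j * X).trace) • pauli j := by
  ext i j
  fin_cases i <;> fin_cases j <;>
    simp [Matrix.trace_fin_two, Matrix.mul_apply, Fin.sum_univ_four, Fin.sum_univ_two,
      Matrix.one_apply] <;> ring_nf <;> simp [Complex.I_sq] <;> ring_nf

lemma pauliRep_comp (f g : Matrix (Fin 2) (Fin 2) ℂ →ₗ[ℂ] Matrix (Fin 2) (Fin 2) ℂ) :
    pauliRep (f ∘ₗ g) = pauliRep f * pauliRep g := by
  ext i j
  have h : g (pauli j) = ∑ k : Fin 4, ((1 / 2 : ℂ) * (pauli k * g (pauli j)).trace) • pauli k :=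
    pauli_expand _
  rw [Matrix.mul_apply]
  simp only [pauliRep, Matrix.of_apply, LinearMap.comp_apply]
  conv_lhs => rw [h]
  rw [map_sum]
  simp only [map_smul, Matrix.mul_sum, Matrix.mul_smul, Matrix.trace_sum, Matrix.trace_smul,
    smul_eq_mul]
  rw [Finset.mul_sum]
  congr 1; ext k; ring

/-! ### Channel basics -/

lemma matExtend_apply {n k : ℕ} (Φ : Matrix (Fin n) (Fin n) ℂ →ₗ[ℂ] Matrix (Fin n) (Fin n) ℂ)
    (M : Matrix (Fin k × Fin n) (Fin k × Fin n) ℂ) (a b : Fin k) (i j : Fin n) :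
    matExtend k Φ M (a, i) (b, j) = Φ (blockAt M a b) i j := by
  simp only [matExtend, Matrix.sum_apply, Matrix.kroneckerMap_apply, Matrix.single,
    Matrix.of_apply]
  rw [Finset.sum_eq_single a, Finset.sum_eq_single b] <;>
    simp +contextual [eq_comm]

lemma blockAt_matExtend {n k : ℕ} (Φ : Matrix (Fin n) (Fin n) ℂ →ₗ[ℂ] Matrix (Fin n) (Fin n) ℂ)
    (M : Matrix (Fin k × Fin n) (Fin k × Fin n) ℂ) (a b : Fin k) :
    blockAt (matExtend k Φ M) a b = Φ (blockAt M a b) := by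
  ext i j; exact matExtend_apply ..

lemma matExtend_comp {n k : ℕ} (f g : Matrix (Fin n) (Fin n) ℂ →ₗ[ℂ] Matrix (Fin n) (Fin n) ℂ)
    (M : Matrix (Fin k × Fin n) (Fin k × Fin n) ℂ) :
    matExtend k (f ∘ₗ g) M = matExtend k f (matExtend k g M) := by
  ext ⟨a, i⟩ ⟨b, j⟩
  rw [matExtend_apply, matExtend_apply, blockAt_matExtend]
  rfl

lemma matExtend_conjLM {n k : ℕ} (U : Matrix (Fin n) (Fin n) ℂ)
    (M : Matrix (Fin k × Fin n) (Fin k × Fin n) ℂ) :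
    matExtend k (conjLM U) M = ((1 : Matrix (Fin k) (Fin k) ℂ) ⊗ₖ U)ᴴ * M *
      ((1 : Matrix (Fin k) (Fin k) ℂ) ⊗ₖ U) := by
  ext ⟨a, i⟩ ⟨b, j⟩
  rw [matExtend_apply]
  simp only [conjLM_apply, Matrix.mul_apply, Matrix.conjTranspose_apply,
    Matrix.kroneckerMap_apply, blockAt, Matrix.of_apply, Matrix.one_apply, Fintype.sum_prod_type]
  simp [Finset.mul_sum, Finset.sum_mul, apply_ite, mul_comm, mul_left_comm]

lemma conjLM_channel {n : ℕ} (U : Matrix (Fin n) (Fin n) ℂ) (hU : Uᴴ * U = 1)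
    (hU' : U * Uᴴ = 1) : IsQuantumChannel (conjLM U) := by
  constructor
  · intro k _ M hM
    rw [matExtend_conjLM]
    exact hM.conjTranspose_mul_mul_same _
  · intro X
    simp only [conjLM_apply]
    rw [Matrix.trace_mul_comm, ← Matrix.mul_assoc, hU', Matrix.one_mul]

lemma channel_comp {n : ℕ} {f g : Matrix (Fin n) (Fin n) ℂ →ₗ[ℂ] Matrix (Fin n) (Fin n) ℂ}
    (hf : IsQuantumChannel f) (hg : IsQuantumChannel g) : IsQuantumChannel (f ∘ₗ g) := by
  refine ⟨fun k hk M hM => ?_, fun X => ?_⟩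
  · rw [matExtend_comp]
    exact hf.1 k hk _ (hg.1 k hk M hM)
  · simp [hf.2, hg.2]

lemma channel_posSemidef {n : ℕ} {f : Matrix (Fin n) (Fin n) ℂ →ₗ[ℂ] Matrix (Fin n) (Fin n) ℂ}
    (hf : IsQuantumChannel f) {X : Matrix (Fin n) (Fin n) ℂ} (hX : X.PosSemidef) :
    (f X).PosSemidef := by
  set e : Fin n ≃ Fin 1 × Fin n :=
    ⟨fun j => (0, j), fun p => p.2, fun j => rfl, fun p => by
      obtain ⟨a, i⟩ := p; simp [Fin.eq_zero]⟩ with he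
  have hM : (X.submatrix e.symm e.symm).PosSemidef := hX.submatrix _
  have := hf.1 1 le_rfl _ hM
  have hb : blockAt (X.submatrix e.symm e.symm) 0 0 = X := by
    ext i' j'; rfl
  have h2 : f X = (matExtend 1 f (X.submatrix e.symm e.symm)).submatrix e e := by
    ext i j
    rw [Matrix.submatrix_apply]
    show f X i j = matExtend 1 f _ (0, i) (0, j)
    rw [matExtend_apply, hb]
  rw [h2]
  exact this.submatrix _

lemma exists_posSemidef_sub {m : Type*} [Fintype m] [DecidableEq m] (H : Matrix m m ℂ)
    (hH : H.IsHermitian) : ∃ P Q : Matrix m m ℂ, P.PosSemidef ∧ Q.PosSemidef ∧ H = P - Q := by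
  set V : Matrix m m ℂ := (hH.eigenvectorUnitary : Matrix m m ℂ) with hV
  refine ⟨V * Matrix.diagonal (fun i => ((max (hH.eigenvalues i) 0 : ℝ) : ℂ)) * Vᴴ,
    V * Matrix.diagonal (fun i => ((max (-hH.eigenvalues i) 0 : ℝ) : ℂ)) * Vᴴ, ?_, ?_, ?_⟩
  · exact (Matrix.posSemidef_diagonal_iff.mpr fun i => by
      simpa using Complex.zero_le_real.mpr (le_max_right _ _)).mul_mul_conjTranspose_same V
  · exact (Matrix.posSemidef_diagonal_iff.mpr fun i => by
      simpa using Complex.zero_le_real.mpr (le_max_right _ _)).mul_mul_conjTranspose_same V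
  · have hst := hH.spectral_theorem
    rw [Unitary.conjStarAlgAut_apply, Matrix.star_eq_conjTranspose] at hst
    have key : (fun i => ((max (hH.eigenvalues i) 0 : ℝ) : ℂ)) -
        (fun i => ((max (-hH.eigenvalues i) 0 : ℝ) : ℂ)) =
        (RCLike.ofReal ∘ hH.eigenvalues : m → ℂ) := by
      funext i
      simp only [Pi.sub_apply, Function.comp_apply, ← Complex.ofReal_sub]
      have hm : max (hH.eigenvalues i) 0 - max (-hH.eigenvalues i) 0 = hH.eigenvalues i := by
        rcases le_total (hH.eigenvalues i) 0 with h | h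
        · rw [max_eq_right h, max_eq_left (by linarith)]; ring
        · rw [max_eq_left h, max_eq_right (by linarith)]; ring
      rw [hm]
      norm_num
    have hd : (Matrix.diagonal fun i => ((max (hH.eigenvalues i) 0 : ℝ) : ℂ)) -
        (Matrix.diagonal fun i => ((max (-hH.eigenvalues i) 0 : ℝ) : ℂ))
        = Matrix.diagonal (RCLike.ofReal ∘ hH.eigenvalues) := by
      rw [Matrix.diagonal_sub]
      exact congrArg Matrix.diagonal (by funext i; exact congrFun key i)
    rw [← Matrix.sub_mul, ← Matrix.mul_sub, hd, ← hst]

lemma channel_hermitian {n : ℕ} {f : Matrix (Fin n) (Fin n) ℂ →ₗ[ℂ] Matrix (Fin n) (Fin n) ℂ}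
    (hf : IsQuantumChannel f) {X : Matrix (Fin n) (Fin n) ℂ} (hX : X.IsHermitian) :
    (f X).IsHermitian := by
  obtain ⟨P, Q, hP, hQ, rfl⟩ := exists_posSemidef_sub X hX
  rw [map_sub]
  exact ((channel_posSemidef hf hP).isHermitian).sub ((channel_posSemidef hf hQ).isHermitian)

lemma pauli_herm (i : Fin 4) : (pauli i).IsHermitian := by
  fin_cases i <;> (ext a b; fin_cases a <;> fin_cases b <;>
    simp [Matrix.conjTranspose_apply, Complex.ext_iff, Matrix.one_apply])

lemma channel_pauliRep_im {f : Matrix (Fin 2) (Fin 2) ℂ →ₗ[ℂ] Matrix (Fin 2) (Fin 2) ℂ}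
    (hf : IsQuantumChannel f) (i j : Fin 4) : (pauliRep f i j).im = 0 := by
  have hherm : (f (pauli j)).IsHermitian := channel_hermitian hf (pauli_herm j)
  have htr : (starRingEnd ℂ) ((pauli i * f (pauli j)).trace) = (pauli i * f (pauli j)).trace := by
    have h1 : ((pauli i * f (pauli j))ᴴ).trace = star ((pauli i * f (pauli j)).trace) :=
      Matrix.trace_conjTranspose _
    rw [Matrix.conjTranspose_mul, hherm.eq, (pauli_herm i).eq] at h1
    calc (starRingEnd ℂ) ((pauli i * f (pauli j)).trace)
        = (f (pauli j) * pauli i).trace := h1.symm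
      _ = (pauli i * f (pauli j)).trace := Matrix.trace_mul_comm _ _
  have him : ((pauli i * f (pauli j)).trace).im = 0 := Complex.conj_eq_iff_im.mp htr
  simp [pauliRep, Complex.mul_im, him]

lemma pauliRep_zero_row {f : Matrix (Fin 2) (Fin 2) ℂ →ₗ[ℂ] Matrix (Fin 2) (Fin 2) ℂ}
    (hf : ∀ X, (f X).trace = X.trace) (j : Fin 4) :
    pauliRep f 0 j = if j = 0 then 1 else 0 := by
  have h : pauliRep f 0 j = (1 / 2 : ℂ) * (pauli j).trace := by
    simp [pauliRep, Matrix.one_mul, hf]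
  rw [h]
  fin_cases j <;> simp [Matrix.trace_fin_two] <;> norm_num

/-! ### Rotations and their unitary lifts -/

/-- elementary rotation about the z axis -/
def rotZ (c s : ℝ) : Matrix (Fin 3) (Fin 3) ℝ := !![c, -s, 0; s, c, 0; 0, 0, 1]
/-- elementary rotation about the y axis -/
def rotY (c s : ℝ) : Matrix (Fin 3) (Fin 3) ℝ := !![c, 0, s; 0, 1, 0; -s, 0, c]

/-- embedding of a 3×3 real matrix as a 4×4 complex matrix `diag(1, R)` -/
def embed (R : Matrix (Fin 3) (Fin 3) ℝ) : Matrix (Fin 4) (Fin 4) ℂ :=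
  !![1, 0, 0, 0;
     0, R 0 0, R 0 1, R 0 2;
     0, R 1 0, R 1 1, R 1 2;
     0, R 2 0, R 2 1, R 2 2]

lemma embed_mul (R S : Matrix (Fin 3) (Fin 3) ℝ) :
    embed (R * S) = embed R * embed S := by
  ext i j
  fin_cases i <;> fin_cases j <;>
    simp [embed, Matrix.mul_apply, Fin.sum_univ_four, Fin.sum_univ_three, Matrix.vecHead,
      Matrix.vecTail, Function.comp] <;> push_cast <;> ring

lemma embed_zero_zero (R : Matrix (Fin 3) (Fin 3) ℝ) : embed R 0 0 = 1 := rfl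

lemma embed_zero_succ (R : Matrix (Fin 3) (Fin 3) ℝ) (j : Fin 3) : embed R 0 j.succ = 0 := by
  fin_cases j <;> rfl

lemma embed_succ_zero (R : Matrix (Fin 3) (Fin 3) ℝ) (i : Fin 3) : embed R i.succ 0 = 0 := by
  fin_cases i <;> rfl

lemma embed_succ_succ (R : Matrix (Fin 3) (Fin 3) ℝ) (i j : Fin 3) :
    embed R i.succ j.succ = (R i j : ℂ) := by
  fin_cases i <;> fin_cases j <;> rfl

def uZ (c s : ℝ) : Matrix (Fin 2) (Fin 2) ℂ := !![1, 0; 0, (c : ℂ) - s * Complex.I]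
def uY (c s : ℝ) : Matrix (Fin 2) (Fin 2) ℂ := !![(c : ℂ), (s : ℂ); -(s : ℂ), (c : ℂ)]

lemma uZ_unitary {c s : ℝ} (h : c ^ 2 + s ^ 2 = 1) :
    (uZ c s)ᴴ * uZ c s = 1 ∧ uZ c s * (uZ c s)ᴴ = 1 := by
  constructor <;> (ext i j; fin_cases i <;> fin_cases j <;>
    simp [uZ, Matrix.mul_apply, Fin.sum_univ_two, Matrix.one_apply, Complex.ext_iff,
      Matrix.vecHead, Matrix.vecTail] <;>
    (try constructor) <;> nlinarith [h])

lemma uY_unitary {c s : ℝ} (h : c ^ 2 + s ^ 2 = 1) :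
    (uY c s)ᴴ * uY c s = 1 ∧ uY c s * (uY c s)ᴴ = 1 := by
  constructor <;> (ext i j; fin_cases i <;> fin_cases j <;>
    simp [uY, Matrix.mul_apply, Fin.sum_univ_two, Matrix.one_apply, Complex.ext_iff,
      Matrix.vecHead, Matrix.vecTail] <;>
    (try constructor) <;> nlinarith [h])

set_option maxHeartbeats 2000000 in
lemma pauliRep_uZ {c s : ℝ} (h : c ^ 2 + s ^ 2 = 1) :
    pauliRep (conjLM (uZ c s)) = embed (rotZ c s) := by
  ext i j
  fin_cases i <;> fin_cases j <;>
    simp [pauliRep, uZ, rotZ, embed, Matrix.trace_fin_two, Matrix.mul_apply,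
      Fin.sum_univ_two, Matrix.conjTranspose_apply, Complex.ext_iff,
      Matrix.vecHead, Matrix.vecTail] <;>
    ring_nf <;>
    (try simp only [← Complex.ofReal_pow, Complex.ofReal_re, Complex.ofReal_im]) <;>
    (try constructor) <;> first | trivial | nlinarith [h]

set_option maxHeartbeats 2000000 in
lemma pauliRep_uY {c s : ℝ} (h : c ^ 2 + s ^ 2 = 1) :
    pauliRep (conjLM (uY c s)) = embed (rotY (c ^ 2 - s ^ 2) (2 * c * s)) := by
  ext i j
  fin_cases i <;> fin_cases j <;>
    simp [pauliRep, uY, rotY, embed, Matrix.trace_fin_two, Matrix.mul_apply,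
      Fin.sum_univ_two, Matrix.conjTranspose_apply, Complex.ext_iff,
      Matrix.vecHead, Matrix.vecTail] <;>
    ring_nf <;>
    (try simp only [← Complex.ofReal_pow, Complex.ofReal_re, Complex.ofReal_im]) <;>
    (try constructor) <;> first | trivial | nlinarith [h]

lemma halfAngle {c s : ℝ} (h : c ^ 2 + s ^ 2 = 1) :
    ∃ c' s' : ℝ, c' ^ 2 + s' ^ 2 = 1 ∧ c' ^ 2 - s' ^ 2 = c ∧ 2 * c' * s' = s := by
  rcases eq_or_lt_of_le (by nlinarith : (-1 : ℝ) ≤ c) with hc | hc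
  · exact ⟨0, 1, by norm_num, by rw [← hc]; ring, by nlinarith⟩
  · have h1 : 0 < 1 + c := by linarith
    have hc' : (0:ℝ) < Real.sqrt ((1 + c) / 2) := Real.sqrt_pos.mpr (by linarith)
    set c' := Real.sqrt ((1 + c) / 2) with hc'def
    have hc2 : c' ^ 2 = (1 + c) / 2 := Real.sq_sqrt (by linarith)
    refine ⟨c', s / (2 * c'), ?_, ?_, ?_⟩
    · field_simp
      nlinarith [hc2]
    · field_simp
      nlinarith [hc2]
    · field_simp

/-! ### Euler decomposition -/

lemma rotZ_orth {c s : ℝ} (h : c ^ 2 + s ^ 2 = 1) : (rotZ c s)ᵀ * rotZ c s = 1 := by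
  ext i j
  fin_cases i <;> fin_cases j <;>
    simp [rotZ, Matrix.mul_apply, Fin.sum_univ_three, Matrix.one_apply,
      Matrix.transpose_apply, Matrix.vecHead, Matrix.vecTail] <;>
    (try (first | ring1 | linear_combination h))

lemma rotY_orth {c s : ℝ} (h : c ^ 2 + s ^ 2 = 1) : (rotY c s)ᵀ * rotY c s = 1 := by
  ext i j
  fin_cases i <;> fin_cases j <;>
    simp [rotY, Matrix.mul_apply, Fin.sum_univ_three, Matrix.one_apply,
      Matrix.transpose_apply, Matrix.vecHead, Matrix.vecTail] <;>
    (try (first | ring1 | linear_combination h))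

lemma rotZ_det {c s : ℝ} (h : c ^ 2 + s ^ 2 = 1) : (rotZ c s).det = 1 := by
  rw [Matrix.det_fin_three]
  simp [rotZ, Matrix.vecHead, Matrix.vecTail]
  linear_combination h

lemma rotY_det {c s : ℝ} (h : c ^ 2 + s ^ 2 = 1) : (rotY c s).det = 1 := by
  rw [Matrix.det_fin_three]
  simp [rotY, Matrix.vecHead, Matrix.vecTail]
  linear_combination h

set_option maxHeartbeats 1000000 in
lemma euler {R : Matrix (Fin 3) (Fin 3) ℝ} (h1 : Rᵀ * R = 1) (h2 : R * Rᵀ = 1)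
    (h3 : R.det = 1) :
    ∃ c1 s1 c2 s2 c3 s3 : ℝ, c1 ^ 2 + s1 ^ 2 = 1 ∧ c2 ^ 2 + s2 ^ 2 = 1 ∧ c3 ^ 2 + s3 ^ 2 = 1 ∧
      R = rotZ c1 s1 * (rotY c2 s2 * rotZ c3 s3) := by
  set x := R 0 2 with hx
  set y := R 1 2 with hy
  set z := R 2 2 with hz
  have hcol : x ^ 2 + y ^ 2 + z ^ 2 = 1 := by
    have e := congrFun (congrFun h1 2) 2
    simp [Matrix.mul_apply, Fin.sum_univ_three, Matrix.one_apply, Matrix.transpose_apply] at e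
    nlinarith [e]
  obtain ⟨cp, sp, ct, st, hP1, hP2, hP5, hP3, hP4, hP6⟩ :
      ∃ cp sp ct st : ℝ, cp ^ 2 + sp ^ 2 = 1 ∧ ct ^ 2 + st ^ 2 = 1 ∧ ct = z ∧
        cp * x + sp * y = st ∧ sp * x - cp * y = 0 ∧ st ^ 2 = x ^ 2 + y ^ 2 := by
    by_cases hxy : x ^ 2 + y ^ 2 = 0
    · have hx0 : x = 0 := by nlinarith
      have hy0 : y = 0 := by nlinarith
      exact ⟨1, 0, z, 0, by norm_num, by nlinarith, rfl, by simp [hx0, hy0],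
        by simp [hx0, hy0], by simp [hx0, hy0]⟩
    · have hr : (0:ℝ) < Real.sqrt (x ^ 2 + y ^ 2) := Real.sqrt_pos.mpr
        (lt_of_le_of_ne (by positivity) (Ne.symm hxy))
      set r := Real.sqrt (x ^ 2 + y ^ 2) with hrdef
      have hr2 : r ^ 2 = x ^ 2 + y ^ 2 := Real.sq_sqrt (by positivity)
      refine ⟨x / r, y / r, z, r, ?_, by nlinarith, rfl, ?_, ?_, hr2⟩
      · field_simp; nlinarith
      · field_simp; nlinarith
      · field_simp; ring
  set A : Matrix (Fin 3) (Fin 3) ℝ :=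
    !![cp * ct, -sp, cp * st; sp * ct, cp, sp * st; -st, 0, ct] with hA
  have hArot : A = rotZ cp sp * rotY ct st := by
    ext i j
    fin_cases i <;> fin_cases j <;>
      simp [hA, rotZ, rotY, Matrix.mul_apply, Fin.sum_univ_three] <;> ring
  have hAo : Aᵀ * A = 1 := by
    rw [hArot, Matrix.transpose_mul, Matrix.mul_assoc, ← Matrix.mul_assoc (rotZ cp sp)ᵀ,
      rotZ_orth hP1, Matrix.one_mul, rotY_orth hP2]
  have hAo' : A * Aᵀ = 1 := mul_eq_one_comm.mp hAo
  set B := Aᵀ * R with hB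
  have hABR : A * B = R := by
    rw [hB, ← Matrix.mul_assoc, hAo', Matrix.one_mul]
  have hBtB : Bᵀ * B = 1 := by
    rw [hB, Matrix.transpose_mul, Matrix.transpose_transpose, Matrix.mul_assoc,
      ← Matrix.mul_assoc A, hAo', Matrix.one_mul, h1]
  have hBBt : B * Bᵀ = 1 := mul_eq_one_comm.mp hBtB
  have hdetA : A.det = 1 := by
    rw [hArot, Matrix.det_mul, rotZ_det hP1, rotY_det hP2, one_mul]
  have hdetB : B.det = 1 := by
    rw [hB, Matrix.det_mul, Matrix.det_transpose, hdetA, h3, one_mul]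
  have hB02 : B 0 2 = 0 := by
    show ∑ k : Fin 3, Aᵀ 0 k * R k 2 = 0
    simp [Fin.sum_univ_three, hA, Matrix.transpose_apply, ← hx, ← hy, ← hz]
    linear_combination ct * hP3 + st * hP5
  have hB12 : B 1 2 = 0 := by
    show ∑ k : Fin 3, Aᵀ 1 k * R k 2 = 0
    simp [Fin.sum_univ_three, hA, Matrix.transpose_apply, ← hx, ← hy, ← hz]
    linear_combination -hP4
  have hB22 : B 2 2 = 1 := by
    show ∑ k : Fin 3, Aᵀ 2 k * R k 2 = 1
    simp [Fin.sum_univ_three, hA, Matrix.transpose_apply, ← hx, ← hy, ← hz]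
    linear_combination st * hP3 + hP6 + hcol + z * hP5
  have hB20 : B 2 0 = 0 := by
    have e := congrFun (congrFun hBtB 0) 2
    simp [Matrix.mul_apply, Fin.sum_univ_three, Matrix.one_apply, Matrix.transpose_apply,
      hB02, hB12, hB22] at e
    linarith [e]
  have hB21 : B 2 1 = 0 := by
    have e := congrFun (congrFun hBtB 1) 2
    simp [Matrix.mul_apply, Fin.sum_univ_three, Matrix.one_apply, Matrix.transpose_apply,
      hB02, hB12, hB22] at e
    linarith [e]
  have hac : B 0 0 ^ 2 + B 1 0 ^ 2 = 1 := by
    have e := congrFun (congrFun hBtB 0) 0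
    simp [Matrix.mul_apply, Fin.sum_univ_three, Matrix.one_apply, Matrix.transpose_apply,
      hB20] at e
    nlinarith [e]
  have hbd : B 0 1 ^ 2 + B 1 1 ^ 2 = 1 := by
    have e := congrFun (congrFun hBtB 1) 1
    simp [Matrix.mul_apply, Fin.sum_univ_three, Matrix.one_apply, Matrix.transpose_apply,
      hB21] at e
    nlinarith [e]
  have hdet2 : B 0 0 * B 1 1 - B 0 1 * B 1 0 = 1 := by
    have e := hdetB
    rw [Matrix.det_fin_three, hB02, hB12, hB20, hB21, hB22] at e
    linarith [e]
  have hkey : (B 0 0 - B 1 1) ^ 2 + (B 0 1 + B 1 0) ^ 2 = 0 := by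
    linear_combination hac + hbd - 2 * hdet2
  have h11 : B 1 1 = B 0 0 := by
    nlinarith [sq_nonneg (B 0 0 - B 1 1), sq_nonneg (B 0 1 + B 1 0)]
  have h01 : B 0 1 = -(B 1 0) := by
    nlinarith [sq_nonneg (B 0 0 - B 1 1), sq_nonneg (B 0 1 + B 1 0)]
  have hBrot : B = rotZ (B 0 0) (B 1 0) := by
    ext i j
    fin_cases i <;> fin_cases j <;>
      simp [rotZ, Matrix.vecHead, Matrix.vecTail, h01, h11, hB02, hB12, hB20, hB21, hB22]
  obtain ⟨a, c, hac', hBr⟩ : ∃ a c : ℝ, a ^ 2 + c ^ 2 = 1 ∧ B = rotZ a c :=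
    ⟨B 0 0, B 1 0, hac, hBrot⟩
  exact ⟨cp, sp, ct, st, a, c, hP1, hP2, hac', by
    rw [← hABR, hBr, hArot, Matrix.mul_assoc]⟩

lemma unitary_mul {A B : Matrix (Fin 2) (Fin 2) ℂ} (hA : Aᴴ * A = 1 ∧ A * Aᴴ = 1)
    (hB : Bᴴ * B = 1 ∧ B * Bᴴ = 1) :
    (A * B)ᴴ * (A * B) = 1 ∧ (A * B) * (A * B)ᴴ = 1 := by
  constructor
  · rw [Matrix.conjTranspose_mul]
    calc Bᴴ * Aᴴ * (A * B) = Bᴴ * (Aᴴ * A) * B := by noncomm_ring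
      _ = 1 := by rw [hA.1, Matrix.mul_one, hB.1]
  · rw [Matrix.conjTranspose_mul]
    calc A * B * (Bᴴ * Aᴴ) = A * (B * Bᴴ) * Aᴴ := by noncomm_ring
      _ = 1 := by rw [hB.2, Matrix.mul_one, hA.2]

lemma exists_lift {R : Matrix (Fin 3) (Fin 3) ℝ} (h1 : Rᵀ * R = 1) (h2 : R * Rᵀ = 1)
    (h3 : R.det = 1) : ∃ U : Matrix (Fin 2) (Fin 2) ℂ,
    Uᴴ * U = 1 ∧ U * Uᴴ = 1 ∧ pauliRep (conjLM U) = embed R := by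
  obtain ⟨c1, s1, c2, s2, c3, s3, n1, n2, n3, hR⟩ := euler h1 h2 h3
  obtain ⟨c, s, hn, hc, hs⟩ := halfAngle n2
  have hu := unitary_mul (uZ_unitary n3) (unitary_mul (uY_unitary hn) (uZ_unitary n1))
  refine ⟨uZ c3 s3 * (uY c s * uZ c1 s1), hu.1, hu.2, ?_⟩
  rw [conjLM_mul, pauliRep_comp, conjLM_mul, pauliRep_comp]
  rw [pauliRep_uZ n1, pauliRep_uY hn, pauliRep_uZ n3, hc, hs]
  rw [hR, embed_mul, embed_mul, Matrix.mul_assoc]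

/-! ### Diagonalization of a real 3×3 matrix by special orthogonal matrices -/

set_option maxHeartbeats 1000000 in
lemma exists_diagonalizers (T : Matrix (Fin 3) (Fin 3) ℝ) :
    ∃ P Q : Matrix (Fin 3) (Fin 3) ℝ,
      Pᵀ * P = 1 ∧ P * Pᵀ = 1 ∧ P.det = 1 ∧
      Qᵀ * Q = 1 ∧ Q * Qᵀ = 1 ∧ Q.det = 1 ∧
      ∀ i j, i ≠ j → (P * T * Q) i j = 0 := by
  classical
  have hS : (Tᴴ * T).IsHermitian := Matrix.isHermitian_conjTranspose_mul_self T
  have hPSD : (Tᴴ * T).PosSemidef := Matrix.posSemidef_conjTranspose_mul_self T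
  set d : Fin 3 → ℝ := hS.eigenvalues with hd
  have hd0 : ∀ i, 0 ≤ d i := fun i => hPSD.eigenvalues_nonneg i
  set V : Matrix (Fin 3) (Fin 3) ℝ := (hS.eigenvectorUnitary : Matrix (Fin 3) (Fin 3) ℝ) with hV
  have hV1 : Vᴴ * V = 1 := by
    exact hS.eigenvectorUnitary.2.1
  have hV2 : V * Vᴴ = 1 := by
    exact hS.eigenvectorUnitary.2.2
  have hspec : Tᴴ * T = V * Matrix.diagonal d * Vᴴ := by
    have h := hS.spectral_theorem
    rw [Unitary.conjStarAlgAut_apply, Matrix.star_eq_conjTranspose] at h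
    have hco : (RCLike.ofReal ∘ hS.eigenvalues : Fin 3 → ℝ) = d := funext fun i => rfl
    rw [hco] at h
    exact h
  set W : Matrix (Fin 3) (Fin 3) ℝ := T * V with hW
  have hWtW : Wᵀ * W = Matrix.diagonal d := by
    have : Wᵀ = Vᴴ * Tᴴ := by
      rw [hW, Matrix.transpose_mul, Matrix.conjTranspose_eq_transpose_of_trivial,
        Matrix.conjTranspose_eq_transpose_of_trivial]
    calc Wᵀ * W = Vᴴ * (Tᴴ * T) * V := by rw [this, hW]; noncomm_ring
      _ = Vᴴ * (V * Matrix.diagonal d * Vᴴ) * V := by rw [hspec]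
      _ = (Vᴴ * V) * Matrix.diagonal d * (Vᴴ * V) := by noncomm_ring
      _ = Matrix.diagonal d := by rw [hV1, Matrix.one_mul, Matrix.mul_one]
  set w : Fin 3 → EuclideanSpace ℝ (Fin 3) := fun i => (WithLp.equiv 2 _).symm (fun k => W k i)
    with hw
  have hinner : ∀ i j, ⟪w i, w j⟫ = Matrix.diagonal d i j := by
    intro i j
    have e := congrFun (congrFun hWtW i) j
    rw [Matrix.mul_apply] at e
    rw [PiLp.inner_apply]
    simpa [hw, Matrix.transpose_apply, mul_comm] using e
  set v : Fin 3 → EuclideanSpace ℝ (Fin 3) := fun i => (Real.sqrt (d i))⁻¹ • w i with hv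
  set s : Set (Fin 3) := {i | d i ≠ 0} with hs
  have horth : Orthonormal ℝ (s.restrict v) := by
    rw [orthonormal_iff_ite]
    rintro ⟨i, hi⟩ ⟨j, hj⟩
    have hdi : 0 < d i := lt_of_le_of_ne (hd0 i) (Ne.symm hi)
    have hdj : 0 < d j := lt_of_le_of_ne (hd0 j) (Ne.symm hj)
    show ⟪v i, v j⟫ = _
    simp only [Set.restrict_apply, hv, real_inner_smul_left, real_inner_smul_right]
    rw [hinner i j]
    by_cases hij : i = j
    · subst hij
      rw [Matrix.diagonal_apply_eq, if_pos rfl]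
      have hne : Real.sqrt (d i) ≠ 0 := ne_of_gt (Real.sqrt_pos.mpr hdi)
      have hms : Real.sqrt (d i) * Real.sqrt (d i) = d i := Real.mul_self_sqrt (hd0 i)
      field_simp [hms]
      rw [Real.sq_sqrt (hd0 i)]
    · rw [Matrix.diagonal_apply_ne _ hij, if_neg (by simpa [Subtype.ext_iff] using hij)]
      ring
  obtain ⟨b, hb⟩ := horth.exists_orthonormalBasis_extension_of_card_eq
    (by simp [finrank_euclideanSpace])
  set Uo : Matrix (Fin 3) (Fin 3) ℝ := Matrix.of (fun k i => b i k) with hUo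
  have hUo1 : Uoᵀ * Uo = 1 := by
    ext i j
    have := (orthonormal_iff_ite (𝕜 := ℝ)).mp b.orthonormal i j
    rw [PiLp.inner_apply] at this
    simp only [Matrix.mul_apply, Matrix.transpose_apply, hUo, Matrix.of_apply, Matrix.one_apply]
    simpa [mul_comm] using this
  have hUo2 : Uo * Uoᵀ = 1 := mul_eq_one_comm.mp hUo1
  have hWdec : W = Uo * Matrix.diagonal (fun i => Real.sqrt (d i)) := by
    ext k i
    rw [Matrix.mul_diagonal]
    by_cases hi : d i = 0
    · have hwz : w i = 0 := by
        rw [← inner_self_eq_zero (𝕜 := ℝ)]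
        rw [hinner i i]
        simp [hi]
      have : W k i = 0 := by
        have := congrArg (fun x => x k) hwz
        simpa [hw] using this
      simp [this, hi]
    · have hbi := hb i hi
      have : Uo k i = (Real.sqrt (d i))⁻¹ * W k i := by
        rw [hUo]
        show b i k = _
        rw [hbi]
        simp [hv, hw]
      rw [this]
      have hsq : Real.sqrt (d i) ≠ 0 :=
        ne_of_gt (Real.sqrt_pos.mpr (lt_of_le_of_ne (hd0 i) (Ne.symm hi)))
      field_simp
  have hdiag0 : Uoᵀ * T * V = Matrix.diagonal (fun i => Real.sqrt (d i)) := by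
    have hTWV : T = W * Vᴴ := by
      rw [hW, Matrix.mul_assoc, hV2, Matrix.mul_one]
    rw [hTWV, hWdec]
    rw [Matrix.conjTranspose_eq_transpose_of_trivial]
    rw [Matrix.mul_assoc, Matrix.mul_assoc, Matrix.mul_assoc]
    have : Vᵀ * V = 1 := by
      rw [← Matrix.conjTranspose_eq_transpose_of_trivial]; exact hV1
    rw [this, Matrix.mul_one, ← Matrix.mul_assoc, hUo1, Matrix.one_mul]
  have hdetUo : Uo.det ^ 2 = 1 := by
    have := congrArg Matrix.det hUo1
    rwa [Matrix.det_mul, Matrix.det_transpose, Matrix.det_one, ← pow_two] at this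
  have hdetV : V.det ^ 2 = 1 := by
    have := congrArg Matrix.det hV1
    rwa [Matrix.det_mul, Matrix.conjTranspose_eq_transpose_of_trivial, Matrix.det_transpose,
      Matrix.det_one, ← pow_two] at this
  set f : Fin 3 → ℝ := fun i => if i = 0 then Uoᵀ.det else 1 with hf
  set g : Fin 3 → ℝ := fun i => if i = 0 then V.det else 1 with hg
  set F := Matrix.diagonal f with hF
  set G := Matrix.diagonal g with hG
  have hFF : F * F = 1 := by
    rw [hF, Matrix.diagonal_mul_diagonal]
    have hfun : (fun i => f i * f i) = (1 : Fin 3 → ℝ) := by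
      funext i
      show f i * f i = 1
      by_cases hi : i = (0 : Fin 3)
      · subst hi
        simp only [hf, if_pos rfl, Matrix.det_transpose]
        nlinarith [hdetUo]
      · simp [hf, hi]
    rw [hfun]; exact Matrix.diagonal_one
  have hGG : G * G = 1 := by
    rw [hG, Matrix.diagonal_mul_diagonal]
    have hfun : (fun i => g i * g i) = (1 : Fin 3 → ℝ) := by
      funext i
      show g i * g i = 1
      by_cases hi : i = (0 : Fin 3)
      · subst hi
        simp only [hg, if_pos rfl]
        nlinarith [hdetV]
      · simp [hg, hi]
    rw [hfun]; exact Matrix.diagonal_one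
  have hFt : Fᵀ = F := Matrix.diagonal_transpose f
  have hGt : Gᵀ = G := Matrix.diagonal_transpose g
  have hdetF : F.det = Uoᵀ.det := by
    rw [hF, Matrix.det_diagonal, Fin.prod_univ_three]
    simp [hf]
  have hdetG : G.det = V.det := by
    rw [hG, Matrix.det_diagonal, Fin.prod_univ_three]
    simp [hg]
  refine ⟨F * Uoᵀ, V * G, ?_, ?_, ?_, ?_, ?_, ?_, ?_⟩
  · rw [Matrix.transpose_mul, hFt, Matrix.transpose_transpose, Matrix.mul_assoc,
      ← Matrix.mul_assoc F, hFF, Matrix.one_mul, hUo2]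
  · rw [Matrix.transpose_mul, hFt, Matrix.transpose_transpose, Matrix.mul_assoc,
      ← Matrix.mul_assoc Uoᵀ, hUo1, Matrix.one_mul, hFF]
  · rw [Matrix.det_mul, hdetF, Matrix.det_transpose, ← pow_two]
    exact hdetUo
  · rw [Matrix.transpose_mul, hGt, Matrix.mul_assoc, ← Matrix.mul_assoc Vᵀ,
      show Vᵀ * V = 1 by rw [← Matrix.conjTranspose_eq_transpose_of_trivial]; exact hV1,
      Matrix.one_mul, hGG]
  · have hre : V * G * (V * G)ᵀ = V * (G * G) * Vᵀ := by
      rw [Matrix.transpose_mul, hGt]; noncomm_ring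
    rw [hre, hGG, Matrix.mul_one,
      show V * Vᵀ = 1 by rw [← Matrix.conjTranspose_eq_transpose_of_trivial]; exact hV2]
  · rw [Matrix.det_mul, hdetG, ← pow_two]
    exact hdetV
  · intro i j hij
    have hre : F * Uoᵀ * T * (V * G) = F * (Uoᵀ * T * V) * G := by
      noncomm_ring
    rw [hre, hdiag0, hF, hG, Matrix.diagonal_mul_diagonal, Matrix.diagonal_mul_diagonal]
    exact Matrix.diagonal_apply_ne _ hij

/-! ### Main theorem -/

/-- **Special orthogonal normal form (Ruskai's decomposition).** Any qubit quantum channel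
can be brought, by composing with two unitary conjugations, to a channel whose Pauli
representation has the block form `[[1, 0ᵀ], [γ, diag (λ₁, λ₂, λ₃)]]` with real entries. -/
theorem special_orthogonal_normal_form
    (Φ : Matrix (Fin 2) (Fin 2) ℂ →ₗ[ℂ] Matrix (Fin 2) (Fin 2) ℂ)
    (hΦ : IsQuantumChannel Φ) :
    ∃ (U₁ U₂ : Matrix (Fin 2) (Fin 2) ℂ),
      U₁ᴴ * U₁ = 1 ∧ U₁ * U₁ᴴ = 1 ∧ U₂ᴴ * U₂ = 1 ∧ U₂ * U₂ᴴ = 1 ∧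
      ∃ D : Matrix (Fin 2) (Fin 2) ℂ →ₗ[ℂ] Matrix (Fin 2) (Fin 2) ℂ,
        (∀ ρ, D ρ = U₁ᴴ * Φ (U₂ᴴ * ρ * U₂) * U₁) ∧
        IsQuantumChannel D ∧
        pauliRep D 0 0 = 1 ∧
        (∀ j : Fin 4, j ≠ 0 → pauliRep D 0 j = 0) ∧
        (∀ i j : Fin 4, i ≠ 0 → j ≠ 0 → i ≠ j → pauliRep D i j = 0) ∧
        (∀ i j : Fin 4, (pauliRep D i j).im = 0) := by
  classical
  set T : Matrix (Fin 3) (Fin 3) ℝ :=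
    Matrix.of (fun i j => (pauliRep Φ i.succ j.succ).re) with hT
  obtain ⟨P, Q, hPa, hPb, hPd, hQa, hQb, hQd, hdiag⟩ := exists_diagonalizers T
  obtain ⟨U₁, hU₁a, hU₁b, hU₁rep⟩ := exists_lift hPa hPb hPd
  obtain ⟨U₂, hU₂a, hU₂b, hU₂rep⟩ := exists_lift hQa hQb hQd
  set D : Matrix (Fin 2) (Fin 2) ℂ →ₗ[ℂ] Matrix (Fin 2) (Fin 2) ℂ :=
    conjLM U₁ ∘ₗ (Φ ∘ₗ conjLM U₂) with hD
  have hDch : IsQuantumChannel D :=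
    channel_comp (conjLM_channel U₁ hU₁a hU₁b) (channel_comp hΦ (conjLM_channel U₂ hU₂a hU₂b))
  have hrep : pauliRep D = embed P * (pauliRep Φ * embed Q) := by
    rw [hD, pauliRep_comp, pauliRep_comp, hU₁rep, hU₂rep]
  have hTc : ∀ k l : Fin 3, ((T k l : ℝ) : ℂ) = pauliRep Φ k.succ l.succ := by
    intro k l
    refine Complex.ext ?_ ?_
    · simp [hT]
    · simp [channel_pauliRep_im hΦ]
  have key : ∀ i' j' : Fin 3,
      pauliRep D i'.succ j'.succ = (((P * T * Q) i' j' : ℝ) : ℂ) := by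
    intro i' j'
    rw [hrep, Matrix.mul_apply, Fin.sum_univ_succ, embed_succ_zero, zero_mul, zero_add]
    have inner : ∀ k' : Fin 3, (pauliRep Φ * embed Q) k'.succ j'.succ
        = (((T * Q) k' j' : ℝ) : ℂ) := by
      intro k'
      rw [Matrix.mul_apply, Fin.sum_univ_succ, embed_zero_succ, mul_zero, zero_add]
      have hcast : (((T * Q) k' j' : ℝ) : ℂ)
          = ∑ l' : Fin 3, ((T k' l' : ℝ) : ℂ) * ((Q l' j' : ℝ) : ℂ) := by
        rw [Matrix.mul_apply]
        push_cast
        rfl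
      rw [hcast]
      refine Finset.sum_congr rfl fun l' _ => ?_
      rw [embed_succ_succ, hTc]
    have hcast2 : (((P * T * Q) i' j' : ℝ) : ℂ)
        = ∑ k' : Fin 3, ((P i' k' : ℝ) : ℂ) * (((T * Q) k' j' : ℝ) : ℂ) := by
      rw [Matrix.mul_assoc, Matrix.mul_apply]
      push_cast
      rfl
    rw [hcast2]
    refine Finset.sum_congr rfl fun k' _ => ?_
    rw [embed_succ_succ, inner]
  have hrow := pauliRep_zero_row hDch.2
  refine ⟨U₁, U₂, hU₁a, hU₁b, hU₂a, hU₂b, D, fun ρ => rfl, hDch, ?_, ?_, ?_, ?_⟩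
  · rw [hrow 0]; simp
  · intro j hj
    rw [hrow j, if_neg hj]
  · intro i j hi hj hij
    have hi' : (i.pred hi).succ = i := Fin.succ_pred i hi
    have hj' : (j.pred hj).succ = j := Fin.succ_pred j hj
    rw [← hi', ← hj', key]
    have hne : i.pred hi ≠ j.pred hj := by
      intro h
      exact hij (by rw [← hi', ← hj', h])
    rw [hdiag _ _ hne]
    norm_num
  · intro i j
    exact channel_pauliRep_im hDch i j

end
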